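/- For left and right orthonormal matrix polynomials on the unit circle, the leading and constant coefficients satisfy L_{n,0}* L_{n,n} = K_{n,n} K_{n,0}*, so that the reflection coefficient H_n = (L_{n,n}*)^{-1} K_{n,0} = L_{n,0} (K_{n,n}*)^{-1} is well-defined. -/
import Mathlib


open MeasureTheory Matrix Filter Topology Complex Finset
open scoped ComplexOrder
set_option maxHeartbeats 1000000

/-- Entrywise (Bochner) integral of a matrix-valued function against a measure on `ℝ`
(representing a matrix measure on the unit circle via the angle `θ`). -/
noncomputable def matInt {p : ℕ} (μ : Measure ℝ) (f : ℝ → Matrix (Fin p) (Fin p) ℂ) :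
    Matrix (Fin p) (Fin p) ℂ :=
  Matrix.of fun i j => ∫ θ, f θ i j ∂μ

/-- Entrywise integral of a matrix-valued function over `[0, 2π]` with respect to `dθ`. -/
noncomputable def matIntI {p : ℕ} (f : ℝ → Matrix (Fin p) (Fin p) ℂ) :
    Matrix (Fin p) (Fin p) ℂ :=
  Matrix.of fun i j => ∫ θ in (0:ℝ)..(2 * Real.pi), f θ i j

/-- The spectral norm (operator 2-norm) of a complex matrix. -/
noncomputable def sNorm {p : ℕ} (M : Matrix (Fin p) (Fin p) ℂ) : ℝ :=
  ‖LinearMap.toContinuousLinearMap (Matrix.toEuclideanLin M)‖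

/-- For left orthonormal matrix polynomials
`φ_n^L(z) = Σ_j z^j aL n j` and right orthonormal matrix polynomials
`φ_n^R(z) = Σ_j z^j aR n j` with respect to a positive matrix measure
`dρ = W dμ` on the unit circle, the leading and constant coefficients satisfy
`L_{n,0}* L_{n,n} = K_{n,n} K_{n,0}*`, so that the reflection coefficient
`H_n = (L_{n,n}*)⁻¹ K_{n,0} = L_{n,0} (K_{n,n}*)⁻¹` is well defined. -/


private lemma expConjIdent (θ : ℝ) (r s : ℕ) :
    Complex.exp ((θ:ℂ) * Complex.I) ^ r *
      ((starRingEnd ℂ) (Complex.exp ((θ:ℂ) * Complex.I))) ^ s =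
    Complex.exp ((((r : ℤ) - (s : ℤ) : ℤ) : ℂ) * (θ:ℂ) * Complex.I) := by
  rw [← Complex.exp_nat_mul, ← Complex.exp_conj, ← Complex.exp_nat_mul, ← Complex.exp_add]
  congr 1
  simp only [_root_.map_mul, Complex.conj_ofReal, Complex.conj_I]
  push_cast
  ring

private lemma intEntryL {p : ℕ} {μ : Measure ℝ} {W : ℝ → Matrix (Fin p) (Fin p) ℂ}
    (hWint : ∀ k : ℤ, ∀ i j, Integrable (fun θ : ℝ => Complex.exp (k * (θ : ℂ) * Complex.I) * W θ i j) μ)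
    (n1 n2 : ℕ) (b1 b2 : ℕ → Matrix (Fin p) (Fin p) ℂ)
    (F G : ℂ → Matrix (Fin p) (Fin p) ℂ)
    (hF : ∀ z, F z = ∑ r ∈ range (n1+1), z ^ r • b1 r)
    (hG : ∀ z, G z = ∑ s ∈ range (n2+1), z ^ s • b2 s)
    (i j : Fin p) :
    Integrable (fun θ : ℝ => (F (Complex.exp (θ * Complex.I)) * W θ *
      (G (Complex.exp (θ * Complex.I)))ᴴ) i j) μ := by
  have key : (fun θ : ℝ => (F (Complex.exp (θ * Complex.I)) * W θ *
      (G (Complex.exp (θ * Complex.I)))ᴴ) i j)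
      = fun θ : ℝ => ∑ b : Fin p, ∑ a : Fin p, ∑ r ∈ range (n1+1), ∑ s ∈ range (n2+1),
        (b1 r i a * (starRingEnd ℂ) (b2 s j b)) *
          (Complex.exp ((((r:ℤ) - (s:ℤ) : ℤ) : ℂ) * (θ:ℂ) * Complex.I) * W θ a b) := by
    funext θ
    rw [Matrix.mul_apply]
    refine Finset.sum_congr rfl fun b _ => ?_
    rw [Matrix.mul_apply, Matrix.conjTranspose_apply, Finset.sum_mul]
    refine Finset.sum_congr rfl fun a _ => ?_
    rw [hF, hG]
    simp only [Matrix.sum_apply, Matrix.smul_apply, smul_eq_mul, Complex.star_def, map_sum,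
      _root_.map_mul, map_pow]
    rw [Finset.sum_mul, Finset.sum_mul_sum]
    refine Finset.sum_congr rfl fun r _ => Finset.sum_congr rfl fun s _ => ?_
    rw [← expConjIdent θ r s]
    ring
  rw [key]
  refine integrable_finset_sum (μ := μ) Finset.univ (f := fun (b : Fin p) (θ : ℝ) => ∑ a : Fin p, ∑ r ∈ range (n1+1), ∑ s ∈ range (n2+1),
        (b1 r i a * (starRingEnd ℂ) (b2 s j b)) *
          (Complex.exp ((((r:ℤ) - (s:ℤ) : ℤ) : ℂ) * (θ:ℂ) * Complex.I) * W θ a b)) fun b _ => ?_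
  refine integrable_finset_sum Finset.univ
    (f := fun (a : Fin p) (θ : ℝ) => ∑ r ∈ range (n1+1), ∑ s ∈ range (n2+1), (b1 r i a * (starRingEnd ℂ) (b2 s j b)) *
          (Complex.exp ((((r:ℤ) - (s:ℤ) : ℤ) : ℂ) * (θ:ℂ) * Complex.I) * W θ a b)) fun a _ => ?_
  refine integrable_finset_sum (range (n1+1))
    (f := fun (r : ℕ) (θ : ℝ) => ∑ s ∈ range (n2+1), (b1 r i a * (starRingEnd ℂ) (b2 s j b)) *
          (Complex.exp ((((r:ℤ) - (s:ℤ) : ℤ) : ℂ) * (θ:ℂ) * Complex.I) * W θ a b)) fun r _ => ?_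
  refine integrable_finset_sum (range (n2+1))
    (f := fun (s : ℕ) (θ : ℝ) => (b1 r i a * (starRingEnd ℂ) (b2 s j b)) *
          (Complex.exp ((((r:ℤ) - (s:ℤ) : ℤ) : ℂ) * (θ:ℂ) * Complex.I) * W θ a b)) fun s _ => ?_
  exact ((hWint _ a b).const_mul _)


private lemma expConjIdent' (θ : ℝ) (r s : ℕ) :
    Complex.exp ((θ:ℂ) * Complex.I) ^ r *
      ((starRingEnd ℂ) (Complex.exp ((θ:ℂ) * Complex.I))) ^ s =
    Complex.exp ((((r : ℤ) - (s : ℤ) : ℤ) : ℂ) * (θ:ℂ) * Complex.I) := by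
  rw [← Complex.exp_nat_mul, ← Complex.exp_conj, ← Complex.exp_nat_mul, ← Complex.exp_add]
  congr 1
  simp only [_root_.map_mul, Complex.conj_ofReal, Complex.conj_I]
  push_cast
  ring

private lemma intEntryR {p : ℕ} {μ : Measure ℝ} {W : ℝ → Matrix (Fin p) (Fin p) ℂ}
    (hWint : ∀ k : ℤ, ∀ i j, Integrable (fun θ : ℝ => Complex.exp (k * (θ : ℂ) * Complex.I) * W θ i j) μ)
    (n1 n2 : ℕ) (b1 b2 : ℕ → Matrix (Fin p) (Fin p) ℂ)
    (F G : ℂ → Matrix (Fin p) (Fin p) ℂ)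
    (hF : ∀ z, F z = ∑ r ∈ range (n1+1), z ^ r • b1 r)
    (hG : ∀ z, G z = ∑ s ∈ range (n2+1), z ^ s • b2 s)
    (i j : Fin p) :
    Integrable (fun θ : ℝ => ((F (Complex.exp (θ * Complex.I)))ᴴ * W θ *
      G (Complex.exp (θ * Complex.I))) i j) μ := by
  have key : (fun θ : ℝ => ((F (Complex.exp (θ * Complex.I)))ᴴ * W θ *
      G (Complex.exp (θ * Complex.I))) i j)
      = fun θ : ℝ => ∑ b : Fin p, ∑ a : Fin p, ∑ r ∈ range (n1+1), ∑ s ∈ range (n2+1),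
        ((starRingEnd ℂ) (b1 r a i) * b2 s b j) *
          (Complex.exp ((((s:ℤ) - (r:ℤ) : ℤ) : ℂ) * (θ:ℂ) * Complex.I) * W θ a b) := by
    funext θ
    rw [Matrix.mul_apply]
    refine Finset.sum_congr rfl fun b _ => ?_
    rw [Matrix.mul_apply, Finset.sum_mul]
    refine Finset.sum_congr rfl fun a _ => ?_
    rw [Matrix.conjTranspose_apply, hF, hG]
    simp only [Matrix.sum_apply, Matrix.smul_apply, smul_eq_mul, Complex.star_def, map_sum,
      _root_.map_mul, map_pow]
    rw [Finset.sum_mul, Finset.sum_mul_sum]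
    refine Finset.sum_congr rfl fun r _ => Finset.sum_congr rfl fun s _ => ?_
    rw [← expConjIdent' θ s r]
    ring
  rw [key]
  refine integrable_finset_sum Finset.univ
    (f := fun (b : Fin p) (θ : ℝ) => ∑ a : Fin p, ∑ r ∈ range (n1+1), ∑ s ∈ range (n2+1),
        ((starRingEnd ℂ) (b1 r a i) * b2 s b j) *
          (Complex.exp ((((s:ℤ) - (r:ℤ) : ℤ) : ℂ) * (θ:ℂ) * Complex.I) * W θ a b)) fun b _ => ?_
  refine integrable_finset_sum Finset.univ
    (f := fun (a : Fin p) (θ : ℝ) => ∑ r ∈ range (n1+1), ∑ s ∈ range (n2+1),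
        ((starRingEnd ℂ) (b1 r a i) * b2 s b j) *
          (Complex.exp ((((s:ℤ) - (r:ℤ) : ℤ) : ℂ) * (θ:ℂ) * Complex.I) * W θ a b)) fun a _ => ?_
  refine integrable_finset_sum (range (n1+1))
    (f := fun (r : ℕ) (θ : ℝ) => ∑ s ∈ range (n2+1),
        ((starRingEnd ℂ) (b1 r a i) * b2 s b j) *
          (Complex.exp ((((s:ℤ) - (r:ℤ) : ℤ) : ℂ) * (θ:ℂ) * Complex.I) * W θ a b)) fun r _ => ?_
  refine integrable_finset_sum (range (n2+1))
    (f := fun (s : ℕ) (θ : ℝ) =>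
        ((starRingEnd ℂ) (b1 r a i) * b2 s b j) *
          (Complex.exp ((((s:ℤ) - (r:ℤ) : ℤ) : ℂ) * (θ:ℂ) * Complex.I) * W θ a b)) fun s _ => ?_
  exact ((hWint _ a b).const_mul _)


section AuxRest
variable {p : ℕ} {μ : Measure ℝ}

private lemma matInt_sum {ι : Type*} (s : Finset ι) (F : ι → ℝ → Matrix (Fin p) (Fin p) ℂ)
    (h : ∀ m ∈ s, ∀ i j, Integrable (fun θ => F m θ i j) μ) :
    matInt μ (fun θ => ∑ m ∈ s, F m θ) = ∑ m ∈ s, matInt μ (F m) := by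
  ext i j
  simp only [matInt, Matrix.of_apply, Matrix.sum_apply]
  exact integral_finset_sum s fun m hm => h m hm i j

private lemma matInt_mul_const (f : ℝ → Matrix (Fin p) (Fin p) ℂ)
    (C : Matrix (Fin p) (Fin p) ℂ) (h : ∀ i j, Integrable (fun θ => f θ i j) μ) :
    matInt μ (fun θ => f θ * C) = matInt μ f * C := by
  ext i j
  simp only [matInt, Matrix.of_apply, Matrix.mul_apply]
  rw [integral_finset_sum _ fun k _ => ((h i k).mul_const (C k j))]
  exact Finset.sum_congr rfl fun k _ => integral_mul_const _ _

private lemma matInt_const_mul (f : ℝ → Matrix (Fin p) (Fin p) ℂ)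
    (C : Matrix (Fin p) (Fin p) ℂ) (h : ∀ i j, Integrable (fun θ => f θ i j) μ) :
    matInt μ (fun θ => C * f θ) = C * matInt μ f := by
  ext i j
  simp only [matInt, Matrix.of_apply, Matrix.mul_apply]
  rw [integral_finset_sum _ fun k _ => ((h k j).const_mul (C i k))]
  exact Finset.sum_congr rfl fun k _ => integral_const_mul _ _

private lemma revLemma (a : ℕ → Matrix (Fin p) (Fin p) ℂ) (n : ℕ) (θ : ℝ) :
    (∑ j ∈ range (n+1), (Complex.exp ((θ:ℂ) * Complex.I)) ^ j • (a (n - j))ᴴ)ᴴ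
      = Complex.exp (-(n:ℂ) * (θ:ℂ) * Complex.I) •
          ∑ j ∈ range (n+1), (Complex.exp ((θ:ℂ) * Complex.I)) ^ j • a j := by
  rw [Finset.smul_sum, Matrix.conjTranspose_sum]
  simp only [Matrix.conjTranspose_smul, Matrix.conjTranspose_conjTranspose, smul_smul]
  rw [← Finset.sum_range_reflect]
  refine Finset.sum_congr rfl fun j hj => ?_
  have hj' : j ≤ n := Nat.lt_succ_iff.mp (Finset.mem_range.mp hj)
  have h1 : n + 1 - 1 - j = n - j := by omega
  have h2 : n - (n - j) = j := Nat.sub_sub_self hj'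
  rw [h1, h2]
  congr 1
  rw [← Complex.exp_nat_mul]
  rw [show star (Complex.exp ((↑(n - j) : ℂ) * ((θ:ℂ) * Complex.I)))
      = Complex.exp ((starRingEnd ℂ) ((↑(n - j) : ℂ) * ((θ:ℂ) * Complex.I))) from
    (Complex.exp_conj _).symm]
  rw [← Complex.exp_nat_mul, ← Complex.exp_add]
  congr 1
  rw [Nat.cast_sub hj']
  simp only [_root_.map_mul, Complex.conj_ofReal, Complex.conj_I, map_sub, map_natCast]
  ring

private lemma expandL (φ : ℕ → ℂ → Matrix (Fin p) (Fin p) ℂ)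
    (a : ℕ → ℕ → Matrix (Fin p) (Fin p) ℂ)
    (hφ : ∀ m z, φ m z = ∑ j ∈ range (m+1), z ^ j • a m j)
    (hlead : ∀ m, IsUnit (a m m)) :
    ∀ (n : ℕ) (b : ℕ → Matrix (Fin p) (Fin p) ℂ), ∃ c : ℕ → Matrix (Fin p) (Fin p) ℂ,
      (∀ z, ∑ j ∈ range (n+1), z ^ j • b j = ∑ m ∈ range (n+1), c m * φ m z) ∧
      c n * a n n = b n := by
  intro n
  induction n with
  | zero =>
    intro b
    have hdet := (Matrix.isUnit_iff_isUnit_det _).mp (hlead 0)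
    refine ⟨fun _ => b 0 * (a 0 0)⁻¹, fun z => ?_, Matrix.nonsing_inv_mul_cancel_right _ _ hdet⟩
    simp only [zero_add, Finset.sum_range_one, pow_zero, one_smul, hφ]
    exact (Matrix.nonsing_inv_mul_cancel_right _ _ hdet).symm
  | succ n ih =>
    intro b
    have hdet := (Matrix.isUnit_iff_isUnit_det (a (n+1) (n+1))).mp (hlead (n+1))
    set cn := b (n+1) * (a (n+1) (n+1))⁻¹ with hcndef
    have hcn : cn * a (n+1) (n+1) = b (n+1) :=
      Matrix.nonsing_inv_mul_cancel_right _ _ hdet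
    obtain ⟨c', hc', hc'top⟩ := ih (fun j => b j - cn * a (n+1) j)
    refine ⟨fun m => if m = n+1 then cn else c' m, fun z => ?_, by beta_reduce; rw [if_pos rfl]; exact hcn⟩
    beta_reduce
    have hR : ∑ m ∈ range (n+2), (if m = n+1 then cn else c' m) * φ m z
        = (∑ m ∈ range (n+1), c' m * φ m z) + cn * φ (n+1) z := by
      rw [Finset.sum_range_succ, if_pos rfl]
      congr 1
      refine Finset.sum_congr rfl fun m hm => ?_
      rw [if_neg (by have := Finset.mem_range.mp hm; omega)]
    rw [hR, ← hc' z, hφ (n+1) z, Finset.mul_sum,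
      Finset.sum_range_succ (fun j => cn * (z ^ j • a (n+1) j)), ← add_assoc,
      ← Finset.sum_add_distrib, Finset.sum_range_succ]
    congr 1
    · refine Finset.sum_congr rfl fun j _ => ?_
      rw [smul_sub, mul_smul_comm]
      abel
    · rw [mul_smul_comm, hcn]

private lemma expandR (φ : ℕ → ℂ → Matrix (Fin p) (Fin p) ℂ)
    (a : ℕ → ℕ → Matrix (Fin p) (Fin p) ℂ)
    (hφ : ∀ m z, φ m z = ∑ j ∈ range (m+1), z ^ j • a m j)
    (hlead : ∀ m, IsUnit (a m m)) :
    ∀ (n : ℕ) (b : ℕ → Matrix (Fin p) (Fin p) ℂ), ∃ c : ℕ → Matrix (Fin p) (Fin p) ℂ,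
      (∀ z, ∑ j ∈ range (n+1), z ^ j • b j = ∑ m ∈ range (n+1), φ m z * c m) ∧
      a n n * c n = b n := by
  intro n
  induction n with
  | zero =>
    intro b
    have hdet := (Matrix.isUnit_iff_isUnit_det _).mp (hlead 0)
    refine ⟨fun _ => (a 0 0)⁻¹ * b 0, fun z => ?_, Matrix.mul_nonsing_inv_cancel_left _ _ hdet⟩
    simp only [zero_add, Finset.sum_range_one, pow_zero, one_smul, hφ]
    exact (Matrix.mul_nonsing_inv_cancel_left _ _ hdet).symm
  | succ n ih =>
    intro b
    have hdet := (Matrix.isUnit_iff_isUnit_det (a (n+1) (n+1))).mp (hlead (n+1))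
    set cn := (a (n+1) (n+1))⁻¹ * b (n+1) with hcndef
    have hcn : a (n+1) (n+1) * cn = b (n+1) :=
      Matrix.mul_nonsing_inv_cancel_left _ _ hdet
    obtain ⟨c', hc', hc'top⟩ := ih (fun j => b j - a (n+1) j * cn)
    refine ⟨fun m => if m = n+1 then cn else c' m, fun z => ?_, by beta_reduce; rw [if_pos rfl]; exact hcn⟩
    beta_reduce
    have hR : ∑ m ∈ range (n+2), φ m z * (if m = n+1 then cn else c' m)
        = (∑ m ∈ range (n+1), φ m z * c' m) + φ (n+1) z * cn := by
      rw [Finset.sum_range_succ, if_pos rfl]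
      congr 1
      refine Finset.sum_congr rfl fun m hm => ?_
      rw [if_neg (by have := Finset.mem_range.mp hm; omega)]
    rw [hR, ← hc' z, hφ (n+1) z, Finset.sum_mul,
      Finset.sum_range_succ (fun j => (z ^ j • a (n+1) j) * cn), ← add_assoc,
      ← Finset.sum_add_distrib, Finset.sum_range_succ]
    congr 1
    · refine Finset.sum_congr rfl fun j _ => ?_
      rw [smul_sub, smul_mul_assoc]
      abel
    · rw [smul_mul_assoc, hcn]

end AuxRest

theorem reflection_coefficient_well_defined
    (p : ℕ) (hp : 0 < p)
    (μ : Measure ℝ) (W : ℝ → Matrix (Fin p) (Fin p) ℂ)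
    (hW : ∀ θ, (W θ).PosSemidef)
    (hWint : ∀ k : ℤ, ∀ i j, Integrable (fun θ : ℝ => Complex.exp (k * (θ : ℂ) * Complex.I) * W θ i j) μ)
    (aL aR : ℕ → ℕ → Matrix (Fin p) (Fin p) ℂ)
    (φL φR : ℕ → ℂ → Matrix (Fin p) (Fin p) ℂ)
    (hφL : ∀ m z, φL m z = ∑ j ∈ range (m + 1), z ^ j • aL m j)
    (hφR : ∀ m z, φR m z = ∑ j ∈ range (m + 1), z ^ j • aR m j)
    (hLlead : ∀ m, IsUnit (aL m m)) (hRlead : ∀ m, IsUnit (aR m m))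
    (horthL : ∀ k m, matInt μ
      (fun θ => φL k (Complex.exp (θ * Complex.I)) * W θ *
        (φL m (Complex.exp (θ * Complex.I)))ᴴ) = if k = m then 1 else 0)
    (horthR : ∀ k m, matInt μ
      (fun θ => (φR k (Complex.exp (θ * Complex.I)))ᴴ * W θ *
        φR m (Complex.exp (θ * Complex.I))) = if k = m then 1 else 0)
    (n : ℕ) :
    (aL n 0)ᴴ * aL n n = aR n n * (aR n 0)ᴴ ∧
    ((aL n n)ᴴ)⁻¹ * aR n 0 = aL n 0 * ((aR n n)ᴴ)⁻¹ := by
  classical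
  obtain ⟨c, hc, hctop⟩ := expandL φL aL hφL hLlead n (fun j => (aR n (n - j))ᴴ)
  obtain ⟨d, hd, hdtop⟩ := expandR φR aR hφR hRlead n (fun j => (aL n (n - j))ᴴ)
  rw [Nat.sub_self] at hctop hdtop
  set f : ℝ → Matrix (Fin p) (Fin p) ℂ := fun θ =>
    Complex.exp (-(n:ℂ) * (θ:ℂ) * Complex.I) •
      (φL n (Complex.exp ((θ:ℂ) * Complex.I)) * W θ *
        φR n (Complex.exp ((θ:ℂ) * Complex.I))) with hfdef
  -- left evaluation of the integral
  have hGm : ∀ m, ∀ z : ℂ, c m * φL m z = ∑ j ∈ range (m+1), z ^ j • (c m * aL m j) := by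
    intro m z
    rw [hφL m z, Finset.mul_sum]
    exact Finset.sum_congr rfl fun j _ => (mul_smul_comm _ _ _)
  have hQ : ∀ θ : ℝ, f θ = ∑ m ∈ range (n+1),
      φL n (Complex.exp ((θ:ℂ)*Complex.I)) * W θ *
        (φL m (Complex.exp ((θ:ℂ)*Complex.I)))ᴴ * (c m)ᴴ := by
    intro θ
    have h2 : Complex.exp (-(n:ℂ)*(θ:ℂ)*Complex.I) •
        φR n (Complex.exp ((θ:ℂ)*Complex.I))
        = (∑ m ∈ range (n+1), c m * φL m (Complex.exp ((θ:ℂ)*Complex.I)))ᴴ := by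
      rw [hφR n, ← revLemma (aR n) n θ, hc]
    have h1 : f θ = φL n (Complex.exp ((θ:ℂ)*Complex.I)) * W θ *
        (Complex.exp (-(n:ℂ)*(θ:ℂ)*Complex.I) •
          φR n (Complex.exp ((θ:ℂ)*Complex.I))) := by
      rw [hfdef, Matrix.mul_smul]
    rw [h1, h2, Matrix.conjTranspose_sum, Matrix.mul_sum]
    refine Finset.sum_congr rfl fun m _ => ?_
    rw [Matrix.conjTranspose_mul, ← Matrix.mul_assoc]
  have hIntSummandL : ∀ m ∈ range (n+1), ∀ i j, Integrable
      (fun θ : ℝ => (φL n (Complex.exp ((θ:ℂ)*Complex.I)) * W θ *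
        (φL m (Complex.exp ((θ:ℂ)*Complex.I)))ᴴ * (c m)ᴴ) i j) μ := by
    intro m _ i j
    have hfun : (fun θ : ℝ => (φL n (Complex.exp ((θ:ℂ)*Complex.I)) * W θ *
          (φL m (Complex.exp ((θ:ℂ)*Complex.I)))ᴴ * (c m)ᴴ) i j)
        = fun θ : ℝ => (φL n (Complex.exp ((θ:ℂ)*Complex.I)) * W θ *
          ((fun z => c m * φL m z) (Complex.exp ((θ:ℂ)*Complex.I)))ᴴ) i j := by
      funext θ
      rw [Matrix.conjTranspose_mul, ← Matrix.mul_assoc]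
    rw [hfun]
    exact intEntryL hWint n m (aL n) (fun j => c m * aL m j) (φL n)
      (fun z => c m * φL m z) (hφL n) (hGm m) i j
  have hML : matInt μ f = (c n)ᴴ := by
    have h1 : matInt μ f = ∑ m ∈ range (n+1),
        matInt μ (fun θ => φL n (Complex.exp ((θ:ℂ)*Complex.I)) * W θ *
          (φL m (Complex.exp ((θ:ℂ)*Complex.I)))ᴴ * (c m)ᴴ) := by
      rw [show f = fun θ : ℝ => ∑ m ∈ range (n+1),
        (φL n (Complex.exp ((θ:ℂ)*Complex.I)) * W θ *
          (φL m (Complex.exp ((θ:ℂ)*Complex.I)))ᴴ * (c m)ᴴ) from funext hQ]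
      exact matInt_sum _ _ hIntSummandL
    rw [h1]
    have h2 : ∀ m ∈ range (n+1),
        matInt μ (fun θ => φL n (Complex.exp ((θ:ℂ)*Complex.I)) * W θ *
          (φL m (Complex.exp ((θ:ℂ)*Complex.I)))ᴴ * (c m)ᴴ)
        = (if n = m then (1 : Matrix (Fin p) (Fin p) ℂ) else 0) * (c m)ᴴ := by
      intro m _
      rw [matInt_mul_const _ _
        (fun i j => intEntryL hWint n m (aL n) (aL m) (φL n) (φL m) (hφL n) (hφL m) i j),
        horthL n m]
    rw [Finset.sum_congr rfl h2]
    simp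
  -- right evaluation of the integral
  have hGm' : ∀ m, ∀ z : ℂ, φR m z * d m = ∑ j ∈ range (m+1), z ^ j • (aR m j * d m) := by
    intro m z
    rw [hφR m z, Finset.sum_mul]
    exact Finset.sum_congr rfl fun j _ => (smul_mul_assoc _ _ _)
  have hP : ∀ θ : ℝ, f θ = ∑ m ∈ range (n+1),
      (d m)ᴴ * ((φR m (Complex.exp ((θ:ℂ)*Complex.I)))ᴴ * W θ *
        φR n (Complex.exp ((θ:ℂ)*Complex.I))) := by
    intro θ
    have h2 : Complex.exp (-(n:ℂ)*(θ:ℂ)*Complex.I) •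
        φL n (Complex.exp ((θ:ℂ)*Complex.I))
        = (∑ m ∈ range (n+1), φR m (Complex.exp ((θ:ℂ)*Complex.I)) * d m)ᴴ := by
      rw [hφL n, ← revLemma (aL n) n θ, hd]
    have h1 : f θ = (Complex.exp (-(n:ℂ)*(θ:ℂ)*Complex.I) •
          φL n (Complex.exp ((θ:ℂ)*Complex.I))) * W θ *
        φR n (Complex.exp ((θ:ℂ)*Complex.I)) := by
      rw [hfdef, Matrix.smul_mul, Matrix.smul_mul]
    rw [h1, h2, Matrix.conjTranspose_sum, Matrix.sum_mul, Matrix.sum_mul]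
    refine Finset.sum_congr rfl fun m _ => ?_
    rw [Matrix.conjTranspose_mul, Matrix.mul_assoc ((d m)ᴴ), Matrix.mul_assoc ((d m)ᴴ)]
  have hIntSummandR : ∀ m ∈ range (n+1), ∀ i j, Integrable
      (fun θ : ℝ => ((d m)ᴴ * ((φR m (Complex.exp ((θ:ℂ)*Complex.I)))ᴴ * W θ *
        φR n (Complex.exp ((θ:ℂ)*Complex.I)))) i j) μ := by
    intro m _ i j
    have hfun : (fun θ : ℝ => ((d m)ᴴ * ((φR m (Complex.exp ((θ:ℂ)*Complex.I)))ᴴ * W θ *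
          φR n (Complex.exp ((θ:ℂ)*Complex.I)))) i j)
        = fun θ : ℝ => (((fun z => φR m z * d m) (Complex.exp ((θ:ℂ)*Complex.I)))ᴴ * W θ *
          φR n (Complex.exp ((θ:ℂ)*Complex.I))) i j := by
      funext θ
      rw [Matrix.conjTranspose_mul, Matrix.mul_assoc ((d m)ᴴ), Matrix.mul_assoc ((d m)ᴴ)]
    rw [hfun]
    exact intEntryR hWint m n (fun j => aR m j * d m) (aR n)
      (fun z => φR m z * d m) (φR n) (hGm' m) (hφR n) i j
  have hMR : matInt μ f = (d n)ᴴ := by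
    have h1 : matInt μ f = ∑ m ∈ range (n+1),
        matInt μ (fun θ => (d m)ᴴ * ((φR m (Complex.exp ((θ:ℂ)*Complex.I)))ᴴ * W θ *
          φR n (Complex.exp ((θ:ℂ)*Complex.I)))) := by
      rw [show f = fun θ : ℝ => ∑ m ∈ range (n+1),
        ((d m)ᴴ * ((φR m (Complex.exp ((θ:ℂ)*Complex.I)))ᴴ * W θ *
          φR n (Complex.exp ((θ:ℂ)*Complex.I)))) from funext hP]
      exact matInt_sum _ _ hIntSummandR
    rw [h1]
    have h2 : ∀ m ∈ range (n+1),
        matInt μ (fun θ => (d m)ᴴ * ((φR m (Complex.exp ((θ:ℂ)*Complex.I)))ᴴ * W θ *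
          φR n (Complex.exp ((θ:ℂ)*Complex.I))))
        = (d m)ᴴ * (if m = n then (1 : Matrix (Fin p) (Fin p) ℂ) else 0) := by
      intro m _
      rw [matInt_const_mul _ _
        (fun i j => intEntryR hWint m n (aR m) (aR n) (φR m) (φR n) (hφR m) (hφR n) i j),
        horthR m n]
    rw [Finset.sum_congr rfl h2]
    simp
  -- conclusion
  have e1 : (aL n n)ᴴ * matInt μ f = aR n 0 := by
    rw [hML, ← Matrix.conjTranspose_mul, hctop, Matrix.conjTranspose_conjTranspose]
  have e2 : matInt μ f * (aR n n)ᴴ = aL n 0 := by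
    rw [hMR, ← Matrix.conjTranspose_mul, hdtop, Matrix.conjTranspose_conjTranspose]
  have hdetLH : IsUnit ((aL n n)ᴴ).det := (Matrix.isUnit_iff_isUnit_det _).mp
    (by simpa [Matrix.star_eq_conjTranspose] using (hLlead n).star)
  have hdetRH : IsUnit ((aR n n)ᴴ).det := (Matrix.isUnit_iff_isUnit_det _).mp
    (by simpa [Matrix.star_eq_conjTranspose] using (hRlead n).star)
  constructor
  · rw [← e1, ← e2, Matrix.conjTranspose_mul, Matrix.conjTranspose_mul,
      Matrix.conjTranspose_conjTranspose, Matrix.conjTranspose_conjTranspose,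
      Matrix.mul_assoc]
  · rw [← e1, ← e2, Matrix.nonsing_inv_mul_cancel_left _ _ hdetLH,
      Matrix.mul_nonsing_inv_cancel_right _ _ hdetRH]
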